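/- Let p be an odd prime, α ≥ 1, and n ≥ 1. Then there is no (p^α, n)-generalized bent function. -/

import Mathlib

/-- The primitive complex `m`-th root of unity `exp(2πi/m)`. -/
noncomputable def zetaC (m : ℕ) : ℂ := Complex.exp (2 * Real.pi * Complex.I / m)

noncomputable def e2 : ZMod 2 → ℂ := fun s => (-1) ^ s.val

def bl {n : ℕ} (y x : Fin n → ZMod 2) : ZMod 2 := ∑ i, y i * x i

lemma zmod2_cases : ∀ s : ZMod 2, s = 0 ∨ s = 1 := by decide

lemma e2_zero : e2 0 = 1 := by simp [e2]

lemma e2_one : e2 1 = -1 := by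
  simp [e2, ZMod.val_one]

lemma e2_add (s t : ZMod 2) : e2 (s + t) = e2 s * e2 t := by
  rcases zmod2_cases s with rfl | rfl <;> rcases zmod2_cases t with rfl | rfl <;>
    simp only [zero_add, add_zero, e2_zero, e2_one, one_mul, mul_one,
      show (1 + 1 : ZMod 2) = 0 from rfl] <;> norm_num

lemma e2_conj (s : ZMod 2) : (starRingEnd ℂ) (e2 s) = e2 s := by
  simp [e2]

lemma neg_one_pow_eq_e2 (k : ℕ) : ((-1 : ℂ)) ^ k = e2 (k : ZMod 2) := by
  rcases Nat.even_or_odd k with h | h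
  · have h2 : ((k : ZMod 2)) = 0 := by
      obtain ⟨t, rfl⟩ := h; push_cast
      exact CharTwo.add_self_eq_zero _
    rw [h.neg_one_pow, h2, e2_zero]
  · have h2 : ((k : ZMod 2)) = 1 := by
      obtain ⟨t, rfl⟩ := h; push_cast
      rw [two_mul, CharTwo.add_self_eq_zero, zero_add]
    rw [h.neg_one_pow, h2, e2_one]

lemma sign_eq_e2 {n : ℕ} (y x : Fin n → ZMod 2) :
    ((-1 : ℂ)) ^ (∑ i : Fin n, (y i).val * (x i).val) = e2 (bl y x) := by
  rw [neg_one_pow_eq_e2]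
  congr 1
  unfold bl
  push_cast [ZMod.natCast_val, ZMod.cast_id]
  rfl

lemma bl_add_right {n : ℕ} (y a b : Fin n → ZMod 2) :
    bl y (a + b) = bl y a + bl y b := by
  unfold bl
  rw [← Finset.sum_add_distrib]
  exact Finset.sum_congr rfl fun i _ => by simp [mul_add]

lemma sum_e2_bl {n : ℕ} (z : Fin n → ZMod 2) :
    ∑ y : Fin n → ZMod 2, e2 (bl y z) = if z = 0 then (2 : ℂ) ^ n else 0 := by
  by_cases hz : z = 0
  · subst hz
    simp [bl, e2_zero, Finset.card_univ]
  · rw [if_neg hz]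
    obtain ⟨i0, hi0⟩ : ∃ i0, z i0 ≠ 0 := by
      by_contra h
      push_neg at h
      exact hz (funext fun i => h i)
    have hz1 : z i0 = 1 := by
      rcases zmod2_cases (z i0) with h | h
      · exact absurd h hi0
      · exact h
    apply Finset.sum_ninvolution (fun y => Function.update y i0 (y i0 + 1))
    · intro y
      have hbl : bl (Function.update y i0 (y i0 + 1)) z = bl y z + 1 := by
        unfold bl
        have hfe : (fun i => Function.update y i0 (y i0 + 1) i * z i)
            = Function.update (fun i => y i * z i) i0 ((y i0 + 1) * z i0) := by
          funext j
          by_cases hj : j = i0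
          · subst hj; simp
          · simp [Function.update_of_ne hj]
        rw [hfe, Finset.sum_update_of_mem (Finset.mem_univ i0)]
        rw [show (∑ i : Fin n, y i * z i)
            = y i0 * z i0 + ∑ i ∈ Finset.univ.erase i0, y i * z i from
          (Finset.add_sum_erase _ _ (Finset.mem_univ i0)).symm]
        rw [hz1, show Finset.univ.erase i0 = Finset.univ \ {i0} from by
          rw [Finset.erase_eq]]
        ring
      rw [hbl, e2_add, e2_one]
      ring
    · intro y _ h
      have := congrFun h i0
      simp at this
    · intro y; exact Finset.mem_univ _
    · intro y
      funext j
      by_cases hj : j = i0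
      · subst hj
        simp [show ∀ a : ZMod 2, a + 1 + 1 = a by decide]
      · simp [Function.update_of_ne hj]

lemma vanish {p α : ℕ} (hp : p.Prime) (hα : 1 ≤ α) {ι : Type} [Fintype ι]
    (g : ι → ZMod (p ^ α))
    (hsum : ∑ x : ι, zetaC (p ^ α) ^ (g x).val = 0) :
    (p : ℤ) ∣ (Fintype.card ι : ℤ) := by
  haveI : Fact p.Prime := ⟨hp⟩
  have hm0 : p ^ α ≠ 0 := pow_ne_zero _ hp.pos.ne'
  have hζ : IsPrimitiveRoot (zetaC (p ^ α)) (p ^ α) := by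
    unfold zetaC; exact Complex.isPrimitiveRoot_exp _ hm0
  set P : Polynomial ℤ := ∑ x : ι, Polynomial.X ^ (g x).val with hP
  have haev : Polynomial.aeval (zetaC (p ^ α)) P = 0 := by
    rw [hP, map_sum]
    simpa using hsum
  have hdvd : Polynomial.cyclotomic (p ^ α) ℤ ∣ P := by
    rw [Polynomial.cyclotomic_eq_minpoly hζ (Nat.pos_of_ne_zero hm0)]
    exact minpoly.isIntegrallyClosed_dvd (hζ.isIntegral (Nat.pos_of_ne_zero hm0)) haev
  obtain ⟨Q, hQ⟩ := hdvd
  have h1 : Polynomial.eval 1 P = (Fintype.card ι : ℤ) := by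
    simp [hP, Polynomial.eval_finset_sum, Finset.card_univ]
  obtain ⟨k, rfl⟩ : ∃ k, α = k + 1 := ⟨α - 1, (Nat.succ_pred_eq_of_pos hα).symm⟩
  refine ⟨Polynomial.eval 1 Q, ?_⟩
  rw [← h1, hQ, Polynomial.eval_mul, Polynomial.eval_one_cyclotomic_prime_pow]

/-- `f : (Fin n → ZMod 2) → ZMod m` is an `(m,n)`-generalized bent function if
`|∑_x ζ_m^{f x} (-1)^{y·x}|² = 2^n` for all `y`. -/
noncomputable def IsGBF (m n : ℕ) (f : (Fin n → ZMod 2) → ZMod m) : Prop :=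
  ∀ y : Fin n → ZMod 2,
    ‖∑ x : Fin n → ZMod 2,
      zetaC m ^ (f x).val * (-1 : ℂ) ^ (∑ i : Fin n, (y i).val * (x i).val)‖ ^ 2
      = (2 : ℝ) ^ n

theorem stmt_9 (p α n : ℕ) (hp : p.Prime) (hodd : Odd p) (hα : 1 ≤ α) (hn : 1 ≤ n) :
    ¬ ∃ f : (Fin n → ZMod 2) → ZMod (p ^ α), IsGBF (p ^ α) n f := by
  rintro ⟨f, hf⟩
  have hm0 : p ^ α ≠ 0 := pow_ne_zero _ hp.pos.ne'
  haveI : NeZero (p ^ α) := ⟨hm0⟩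
  set ζ := zetaC (p ^ α) with hζdef
  have hζ : IsPrimitiveRoot ζ (p ^ α) := by
    rw [hζdef]; unfold zetaC; exact Complex.isPrimitiveRoot_exp _ hm0
  have hζm : ζ ^ (p ^ α) = 1 := hζ.pow_eq_one
  have hζne : ζ ≠ 0 := fun h => by
    rw [h, zero_pow hm0] at hζm
    exact zero_ne_one hζm
  have hconj : (starRingEnd ℂ) ζ = ζ⁻¹ := by
    rw [hζdef]; unfold zetaC
    rw [← Complex.exp_conj, ← Complex.exp_neg]
    congr 1
    simp only [map_div₀, map_mul, Complex.conj_I, map_ofNat, Complex.conj_ofReal,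
      map_natCast, map_pow]
    ring
  have hpow : ∀ a b : ZMod (p ^ α), ζ ^ (a + b).val = ζ ^ a.val * ζ ^ b.val := by
    intro a b
    rw [ZMod.val_add, ← pow_eq_pow_mod _ hζm, pow_add]
  have hdiff : ∀ a b : ZMod (p ^ α), ζ ^ a.val * (ζ ^ b.val)⁻¹ = ζ ^ (a - b).val := by
    intro a b
    have h := hpow (a - b) b
    rw [sub_add_cancel] at h
    rw [h, mul_assoc, mul_inv_cancel₀ (pow_ne_zero _ hζne), mul_one]
  have hconjS : ∀ y : Fin n → ZMod 2,
      (starRingEnd ℂ) (∑ x : Fin n → ZMod 2, ζ ^ (f x).val * e2 (bl y x))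
      = ∑ x : Fin n → ZMod 2, (ζ ^ (f x).val)⁻¹ * e2 (bl y x) := by
    intro y
    rw [map_sum]
    refine Finset.sum_congr rfl fun x _ => ?_
    rw [map_mul, e2_conj, map_pow, hconj, inv_pow]
  have hkey : ∀ y : Fin n → ZMod 2,
      (∑ x : Fin n → ZMod 2, ζ ^ (f x).val * e2 (bl y x)) *
      (∑ x : Fin n → ZMod 2, (ζ ^ (f x).val)⁻¹ * e2 (bl y x)) = (2 : ℂ) ^ n := by
    intro y
    have h1 := hf y
    rw [show (∑ x : Fin n → ZMod 2, zetaC (p ^ α) ^ (f x).val *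
        (-1 : ℂ) ^ (∑ i : Fin n, (y i).val * (x i).val))
        = ∑ x : Fin n → ZMod 2, ζ ^ (f x).val * e2 (bl y x) from
      Finset.sum_congr rfl fun x _ => by rw [sign_eq_e2, hζdef]] at h1
    rw [← hconjS y, Complex.mul_conj, ← Complex.sq_norm, h1]
    push_cast
    ring
  have hn' : 0 < n := hn
  set d : Fin n → ZMod 2 := fun _ => 1 with hd
  have hdne : d ≠ 0 := fun h => by
    have := congrFun h ⟨0, hn'⟩
    simp [hd] at this
  have hneg : ∀ w : Fin n → ZMod 2, -w = w := fun w =>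
    funext fun i => CharTwo.neg_eq _
  have hcond : ∀ x x' : Fin n → ZMod 2, (d + x + x' = 0) ↔ (x' = d + x) := by
    intro x x'
    rw [add_comm (d + x) x', add_eq_zero_iff_eq_neg, hneg]
  have hzero : ∑ y : Fin n → ZMod 2, e2 (bl y d) * ((2 : ℂ) ^ n) = 0 := by
    rw [← Finset.sum_mul, sum_e2_bl, if_neg hdne, zero_mul]
  have hexp : ∀ y : Fin n → ZMod 2, e2 (bl y d) * ((2 : ℂ) ^ n)
      = ∑ x : Fin n → ZMod 2, ∑ x' : Fin n → ZMod 2,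
        (ζ ^ (f x).val * (ζ ^ (f x').val)⁻¹) * e2 (bl y (d + x + x')) := by
    intro y
    rw [← hkey y, Finset.sum_mul_sum, Finset.mul_sum]
    refine Finset.sum_congr rfl fun x _ => ?_
    rw [Finset.mul_sum]
    refine Finset.sum_congr rfl fun x' _ => ?_
    rw [bl_add_right, bl_add_right, e2_add, e2_add]
    ring
  have hswap : ∑ y : Fin n → ZMod 2, ∑ x : Fin n → ZMod 2, ∑ x' : Fin n → ZMod 2,
      (ζ ^ (f x).val * (ζ ^ (f x').val)⁻¹) * e2 (bl y (d + x + x'))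
      = ∑ x : Fin n → ZMod 2, ∑ x' : Fin n → ZMod 2, ∑ y : Fin n → ZMod 2,
      (ζ ^ (f x).val * (ζ ^ (f x').val)⁻¹) * e2 (bl y (d + x + x')) := by
    rw [Finset.sum_comm]
    exact Finset.sum_congr rfl fun x _ => Finset.sum_comm
  have hmain0 : ∑ x : Fin n → ZMod 2,
      (ζ ^ (f x).val * (ζ ^ (f (d + x)).val)⁻¹) * ((2 : ℂ) ^ n) = 0 := by
    calc ∑ x : Fin n → ZMod 2, (ζ ^ (f x).val * (ζ ^ (f (d + x)).val)⁻¹) * ((2 : ℂ) ^ n)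
        = ∑ x : Fin n → ZMod 2, ∑ x' : Fin n → ZMod 2,
            (ζ ^ (f x).val * (ζ ^ (f x').val)⁻¹) *
              (if x' = d + x then (2 : ℂ) ^ n else 0) := by
          refine Finset.sum_congr rfl fun x _ => ?_
          simp only [mul_ite, mul_zero, Finset.sum_ite_eq', Finset.mem_univ, if_true]
      _ = ∑ x : Fin n → ZMod 2, ∑ x' : Fin n → ZMod 2,
            (ζ ^ (f x).val * (ζ ^ (f x').val)⁻¹) *
              (∑ y : Fin n → ZMod 2, e2 (bl y (d + x + x'))) := by
          refine Finset.sum_congr rfl fun x _ => Finset.sum_congr rfl fun x' _ => ?_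
          rw [sum_e2_bl]
          congr 1
          by_cases h : x' = d + x
          · rw [if_pos h, if_pos ((hcond x x').mpr h)]
          · rw [if_neg h, if_neg (fun hc => h ((hcond x x').mp hc))]
      _ = ∑ x : Fin n → ZMod 2, ∑ x' : Fin n → ZMod 2, ∑ y : Fin n → ZMod 2,
            (ζ ^ (f x).val * (ζ ^ (f x').val)⁻¹) * e2 (bl y (d + x + x')) := by
          exact Finset.sum_congr rfl fun x _ => Finset.sum_congr rfl fun x' _ =>
            Finset.mul_sum _ _ _
      _ = ∑ y : Fin n → ZMod 2, e2 (bl y d) * ((2 : ℂ) ^ n) := by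
          rw [← hswap]
          exact Finset.sum_congr rfl fun y _ => (hexp y).symm
      _ = 0 := hzero
  have h2n : ((2 : ℂ) ^ n) ≠ 0 := pow_ne_zero _ two_ne_zero
  have hmain : ∑ x : Fin n → ZMod 2, zetaC (p ^ α) ^ ((f x - f (d + x)).val) = 0 := by
    rw [← Finset.sum_mul] at hmain0
    rcases mul_eq_zero.mp hmain0 with h | h
    · rw [← h]
      exact Finset.sum_congr rfl fun x _ => (hdiff _ _).symm
    · exact absurd h h2n
  have hdvd : (p : ℤ) ∣ (Fintype.card (Fin n → ZMod 2) : ℤ) :=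
    vanish hp hα (fun x : Fin n → ZMod 2 => f x - f (d + x)) hmain
  have hcard : Fintype.card (Fin n → ZMod 2) = 2 ^ n := by
    simp [Fintype.card_fun]
  rw [hcard] at hdvd
  have hdn : p ∣ 2 ^ n := by exact_mod_cast hdvd
  have hp2 : p ∣ 2 := hp.dvd_of_dvd_pow hdn
  have hpe : p = 2 := (Nat.prime_dvd_prime_iff_eq hp Nat.prime_two).mp hp2
  rw [hpe] at hodd
  exact (Nat.not_odd_iff_even.mpr even_two) hodd
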